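/- For all i, j ≥ 1: 3^i·2^{binom(i+1,2)}·N_5(i,j) ≥ j·B_5(i,j), where binom denotes the binomial coefficient (i.e., N_5(i,j) ≥ j·B_5(i,j)/ξ(i) with ξ(i) = 3^i·2^{binom(i+1,2)}). -/

import Mathlib

/-- Block counts `B₄(i,j)` of the order-4 construction (junk when an index is 0):
`B₄(1,j) = 2`, `B₄(i,1) = 2^i`, and `B₄(i,j) = 2·y·B₄(i−1,y)` with `y = B₄(i,j−1)`. -/
def B4 : ℕ → ℕ → ℕ
  | 0, _ => 0
  | 1, _ => 2
  | _+2, 0 => 0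
  | i+2, 1 => 2 ^ (i + 2)
  | i+2, j+2 => 2 * B4 (i+2) (j+1) * B4 (i+1) (B4 (i+2) (j+1))
  termination_by i j => (i, j)

/-- Alphabet sizes `N₄(i,j)`: `N₄(1,j) = j`, `N₄(i,1) = 1`, and
`N₄(i,j) = N₄(i−1,y) + 2·B₄(i−1,y)·N₄(i,j−1)` with `y = B₄(i,j−1)`. -/
def N4 : ℕ → ℕ → ℕ
  | 0, _ => 0
  | 1, j => j
  | _+2, 0 => 0
  | _+2, 1 => 1
  | i+2, j+2 =>
      N4 (i+1) (B4 (i+2) (j+1)) + 2 * B4 (i+1) (B4 (i+2) (j+1)) * N4 (i+2) (j+1)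
  termination_by i j => (i, j)

/-- Block counts `B₅(i,j)` of the order-5 construction: `B₅(1,j) = 2`,
`B₅(i,1) = (2i−3)·2^i + 4`, and `B₅(i,j) = B₅(i−1, N₄(i,z))·w·z` with
`z = B₅(i,j−1)` and `w = 2·B₄(i,z) + B₄(i,z)/2^{i−1}`. -/
def B5 : ℕ → ℕ → ℕ
  | 0, _ => 0
  | 1, _ => 2
  | _+2, 0 => 0
  | i+2, 1 => (2 * (i + 2) - 3) * 2 ^ (i + 2) + 4
  | i+2, j+2 =>
      B5 (i+1) (N4 (i+2) (B5 (i+2) (j+1))) *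
        (2 * B4 (i+2) (B5 (i+2) (j+1)) + B4 (i+2) (B5 (i+2) (j+1)) / 2 ^ (i+1)) *
        B5 (i+2) (j+1)
  termination_by i j => (i, j)

/-- Alphabet sizes `N₅(i,j)`: `N₅(1,j) = j`, `N₅(i,1) = 1`, and
`N₅(i,j) = N₅(i−1, N₄(i,z)) + B₅(i−1, N₄(i,z))·w·N₅(i,j−1)` with
`z = B₅(i,j−1)` and `w = 2·B₄(i,z) + B₄(i,z)/2^{i−1}`. -/
def N5 : ℕ → ℕ → ℕ
  | 0, _ => 0
  | 1, j => j
  | _+2, 0 => 0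
  | _+2, 1 => 1
  | i+2, j+2 =>
      N5 (i+1) (N4 (i+2) (B5 (i+2) (j+1))) +
      B5 (i+1) (N4 (i+2) (B5 (i+2) (j+1))) *
        (2 * B4 (i+2) (B5 (i+2) (j+1)) + B4 (i+2) (B5 (i+2) (j+1)) / 2 ^ (i+1)) *
        N5 (i+2) (j+1)
  termination_by i j => (i, j)


lemma B4_pos : ∀ i j, 0 < B4 (i+1) (j+1) := by
  intro i
  induction i with
  | zero => intro j; simp [B4]
  | succ i ih =>
    intro j
    induction j with
    | zero => simp [B4]
    | succ j ihj =>
      have e1 : B4 (i+2) (j+2) = 2 * B4 (i+2) (j+1) * B4 (i+1) (B4 (i+2) (j+1)) := by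
        simp only [B4]
      rw [e1]
      have hy : 0 < B4 (i+2) (j+1) := ihj
      have h2 := ih (B4 (i+2) (j+1) - 1)
      rw [Nat.sub_add_cancel hy] at h2
      positivity

lemma N4_pos : ∀ i j, 0 < N4 (i+1) (j+1) := by
  intro i
  induction i with
  | zero => intro j; simp [N4]
  | succ i ih =>
    intro j
    induction j with
    | zero => simp [N4]
    | succ j ihj =>
      have e1 : N4 (i+2) (j+2)
          = N4 (i+1) (B4 (i+2) (j+1)) + 2 * B4 (i+1) (B4 (i+2) (j+1)) * N4 (i+2) (j+1) := by
        simp only [N4]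
      rw [e1]
      have hy : 0 < B4 (i+2) (j+1) := B4_pos (i+1) j
      have h2 := ih (B4 (i+2) (j+1) - 1)
      rw [Nat.sub_add_cancel hy] at h2
      omega

lemma key4 : ∀ i j, j * B4 (i+1) j ≤ 2 ^ (i+1) * N4 (i+1) j := by
  intro i
  induction i with
  | zero => intro j; simp [B4, N4]; omega
  | succ i ih =>
    intro j
    induction j with
    | zero => simp
    | succ j ihj =>
      cases j with
      | zero => simp [B4, N4]
      | succ j =>
        have e1 : B4 (i+2) (j+2) = 2 * B4 (i+2) (j+1) * B4 (i+1) (B4 (i+2) (j+1)) := by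
          simp only [B4]
        have e2 : N4 (i+2) (j+2)
            = N4 (i+1) (B4 (i+2) (j+1)) + 2 * B4 (i+1) (B4 (i+2) (j+1)) * N4 (i+2) (j+1) := by
          simp only [N4]
        rw [e1, e2]
        set y := B4 (i+2) (j+1) with hy
        have h1 : y * B4 (i+1) y ≤ 2 ^ (i+1) * N4 (i+1) y := ih y
        have h2 : (j+1) * y ≤ 2 ^ (i+2) * N4 (i+2) (j+1) := ihj
        have e3 : (j+2) * (2 * y * B4 (i+1) y)
            = 2 * (y * B4 (i+1) y) + 2 * B4 (i+1) y * ((j+1) * y) := by ring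
        rw [e3, Nat.mul_add]
        have hA : 2 * (y * B4 (i+1) y) ≤ 2 ^ (i+2) * N4 (i+1) y := by
          calc 2 * (y * B4 (i+1) y) ≤ 2 * (2 ^ (i+1) * N4 (i+1) y) :=
                Nat.mul_le_mul_left _ h1
            _ = 2 ^ (i+2) * N4 (i+1) y := by ring
        have hB : 2 * B4 (i+1) y * ((j+1) * y)
            ≤ 2 ^ (i+2) * (2 * B4 (i+1) y * N4 (i+2) (j+1)) := by
          calc 2 * B4 (i+1) y * ((j+1) * y)
              ≤ 2 * B4 (i+1) y * (2 ^ (i+2) * N4 (i+2) (j+1)) :=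
                Nat.mul_le_mul_left _ h2
            _ = 2 ^ (i+2) * (2 * B4 (i+1) y * N4 (i+2) (j+1)) := by ring
        exact Nat.add_le_add hA hB

lemma B5_pos : ∀ i j, 0 < B5 (i+1) (j+1) := by
  intro i
  induction i with
  | zero => intro j; simp [B5]
  | succ i ih =>
    intro j
    induction j with
    | zero => simp [B5]
    | succ j ihj =>
      have e1 : B5 (i+2) (j+2) = B5 (i+1) (N4 (i+2) (B5 (i+2) (j+1))) *
          (2 * B4 (i+2) (B5 (i+2) (j+1)) + B4 (i+2) (B5 (i+2) (j+1)) / 2 ^ (i+1)) *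
          B5 (i+2) (j+1) := by simp only [B5]
      rw [e1]
      have hz : 0 < B5 (i+2) (j+1) := ihj
      have hm : 0 < N4 (i+2) (B5 (i+2) (j+1)) := by
        have h := N4_pos (i+1) (B5 (i+2) (j+1) - 1)
        rwa [Nat.sub_add_cancel hz] at h
      have hA : 0 < B5 (i+1) (N4 (i+2) (B5 (i+2) (j+1))) := by
        have h := ih (N4 (i+2) (B5 (i+2) (j+1)) - 1)
        rwa [Nat.sub_add_cancel hm] at h
      have hb : 0 < B4 (i+2) (B5 (i+2) (j+1)) := by
        have h := B4_pos (i+1) (B5 (i+2) (j+1) - 1)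
        rwa [Nat.sub_add_cancel hz] at h
      have hw : 0 < 2 * B4 (i+2) (B5 (i+2) (j+1)) + B4 (i+2) (B5 (i+2) (j+1)) / 2 ^ (i+1) :=
        Nat.lt_of_lt_of_le (Nat.mul_pos two_pos hb) (Nat.le_add_right _ _)
      positivity

lemma key5 : ∀ i j, j * B5 (i+1) j ≤ 3 ^ (i+1) * 2 ^ Nat.choose (i+2) 2 * N5 (i+1) j := by
  intro i
  induction i with
  | zero =>
    intro j
    simp [B5, N5, Nat.choose]
    omega
  | succ i ih =>
    intro j
    induction j with
    | zero => simp
    | succ j ihj =>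
      cases j with
      | zero =>
        have e1 : B5 (i+2) 1 = (2 * (i + 2) - 3) * 2 ^ (i + 2) + 4 := by simp only [B5]
        have e2 : N5 (i+2) 1 = 1 := by simp only [N5]
        rw [e1, e2]
        have h4 : 4 ≤ 2 ^ (i+2) := by
          calc (4:ℕ) = 2 ^ 2 := rfl
          _ ≤ 2 ^ (i+2) := Nat.pow_le_pow_right (by norm_num) (by omega)
        have hsub : 2 * (i + 2) - 3 = 2*i+1 := by omega
        have h3 : 2*i+3 ≤ 3 ^ (i+2) := by
          have hlt : i+1 < 2 ^ (i+1) := Nat.lt_two_pow_self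
          calc 2*i+3 ≤ 2*(i+2) := by omega
            _ ≤ 2*(2 ^ (i+1)) := by omega
            _ = 2 ^ (i+2) := by ring
            _ ≤ 3 ^ (i+2) := Nat.pow_le_pow_left (by norm_num) _
        have h5 : (i+2) ≤ Nat.choose (i+3) 2 := by
          rw [Nat.choose_two_right]
          have hstep : i+3-1 = i+2 := rfl
          rw [hstep, Nat.le_div_iff_mul_le (by norm_num)]
          nlinarith
        have h6 : 2 ^ (i+2) ≤ 2 ^ Nat.choose (i+3) 2 :=
          Nat.pow_le_pow_right (by norm_num) h5
        calc (0+1) * ((2 * (i + 2) - 3) * 2 ^ (i + 2) + 4)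
            = (2*i+1) * 2 ^ (i+2) + 4 := by rw [hsub]; ring
          _ ≤ (2*i+1) * 2 ^ (i+2) + 2 ^ (i+2) := by omega
          _ = (2*i+2) * 2 ^ (i+2) := by ring
          _ ≤ (2*i+3) * 2 ^ (i+2) := Nat.mul_le_mul_right _ (by omega)
          _ ≤ 3 ^ (i+2) * 2 ^ (i+2) := Nat.mul_le_mul_right _ h3
          _ ≤ 3 ^ (i+2) * 2 ^ Nat.choose (i+3) 2 := Nat.mul_le_mul_left _ h6
          _ = 3 ^ (i+2) * 2 ^ Nat.choose (i+3) 2 * 1 := (mul_one _).symm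
      | succ j =>
        have e1 : B5 (i+2) (j+2) = B5 (i+1) (N4 (i+2) (B5 (i+2) (j+1))) *
            (2 * B4 (i+2) (B5 (i+2) (j+1)) + B4 (i+2) (B5 (i+2) (j+1)) / 2 ^ (i+1)) *
            B5 (i+2) (j+1) := by simp only [B5]
        have e2 : N5 (i+2) (j+2) = N5 (i+1) (N4 (i+2) (B5 (i+2) (j+1))) +
            B5 (i+1) (N4 (i+2) (B5 (i+2) (j+1))) *
              (2 * B4 (i+2) (B5 (i+2) (j+1)) + B4 (i+2) (B5 (i+2) (j+1)) / 2 ^ (i+1)) *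
              N5 (i+2) (j+1) := by simp only [N5]
        rw [e1, e2]
        set z := B5 (i+2) (j+1) with hzdef
        set m := N4 (i+2) z with hmdef
        set A := B5 (i+1) m with hAdef
        set b := B4 (i+2) z with hbdef
        set w := 2 * b + b / 2 ^ (i+1) with hwdef
        have hzpos : 0 < z := B5_pos (i+1) j
        have hmpos : 0 < m := by
          have h := N4_pos (i+1) (z - 1); rwa [Nat.sub_add_cancel hzpos] at h
        have hwb : w ≤ 3 * b := by
          have h := Nat.div_le_self b (2 ^ (i+1)); omega
        have hzb : z * b ≤ 2 ^ (i+2) * m := key4 (i+1) z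
        have hwz : w * z ≤ 3 * (2 ^ (i+2) * m) := by
          calc w * z ≤ 3 * b * z := Nat.mul_le_mul_right _ hwb
            _ = 3 * (z * b) := by ring
            _ ≤ 3 * (2 ^ (i+2) * m) := Nat.mul_le_mul_left _ hzb
        have hAm : m * A ≤ 3 ^ (i+1) * 2 ^ Nat.choose (i+2) 2 * N5 (i+1) m := ih m
        have hchoose : Nat.choose (i+3) 2 = Nat.choose (i+2) 2 + (i+2) := by
          have hc1 : Nat.choose (i+3) 2 = Nat.choose (i+2) 1 + Nat.choose (i+2) 2 :=
            Nat.choose_succ_succ (i+2) 1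
          rw [Nat.choose_one_right] at hc1
          omega
        have hxi : 3 ^ (i+2) * 2 ^ Nat.choose (i+3) 2
            = 3 * 2 ^ (i+2) * (3 ^ (i+1) * 2 ^ Nat.choose (i+2) 2) := by
          rw [hchoose, pow_add]; ring
        have hjz : (j+1) * z ≤ 3 ^ (i+2) * 2 ^ Nat.choose (i+3) 2 * N5 (i+2) (j+1) := ihj
        have part1 : A * w * z ≤ 3 ^ (i+2) * 2 ^ Nat.choose (i+3) 2 * N5 (i+1) m := by
          calc A * w * z = A * (w * z) := by ring
            _ ≤ A * (3 * (2 ^ (i+2) * m)) := Nat.mul_le_mul_left _ hwz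
            _ = 3 * 2 ^ (i+2) * (m * A) := by ring
            _ ≤ 3 * 2 ^ (i+2) * (3 ^ (i+1) * 2 ^ Nat.choose (i+2) 2 * N5 (i+1) m) :=
                Nat.mul_le_mul_left _ hAm
            _ = 3 ^ (i+2) * 2 ^ Nat.choose (i+3) 2 * N5 (i+1) m := by rw [hxi]; ring
        have part2 : (j+1) * (A * w * z)
            ≤ 3 ^ (i+2) * 2 ^ Nat.choose (i+3) 2 * (A * w * N5 (i+2) (j+1)) := by
          calc (j+1) * (A * w * z) = A * w * ((j+1) * z) := by ring
            _ ≤ A * w * (3 ^ (i+2) * 2 ^ Nat.choose (i+3) 2 * N5 (i+2) (j+1)) :=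
                Nat.mul_le_mul_left _ hjz
            _ = 3 ^ (i+2) * 2 ^ Nat.choose (i+3) 2 * (A * w * N5 (i+2) (j+1)) := by ring
        calc (j+2) * (A * w * z) = A * w * z + (j+1) * (A * w * z) := by ring
          _ ≤ 3 ^ (i+2) * 2 ^ Nat.choose (i+3) 2 * N5 (i+1) m
              + 3 ^ (i+2) * 2 ^ Nat.choose (i+3) 2 * (A * w * N5 (i+2) (j+1)) :=
              Nat.add_le_add part1 part2
          _ = 3 ^ (i+2) * 2 ^ Nat.choose (i+3) 2 * (N5 (i+1) m + A * w * N5 (i+2) (j+1)) := by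
              ring

/-- For all `i, j ≥ 1`: `ξ(i)·N₅(i,j) ≥ j·B₅(i,j)` where `ξ(i) = 3^i·2^{C(i+1,2)}`. -/
theorem stmt16 (i j : ℕ) (hi : 1 ≤ i) (hj : 1 ≤ j) :
    j * B5 i j ≤ 3 ^ i * 2 ^ Nat.choose (i + 1) 2 * N5 i j := by
  obtain ⟨i, rfl⟩ : ∃ k, i = k + 1 := ⟨i - 1, by omega⟩
  exact key5 i j
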